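/- Suppose the piece T⁺ of an interface element T (of diameter h_T) contains a ball B⁺ of radius ρ h_T/8, and suppose the inverse inequality |p|_{H¹(B)} ≤ C_inv h_T⁻¹ ‖p‖_{L²(B)} holds for linear polynomials p on balls B of radius ρ h_T/8. Then there exists a constant C depending only on ρ, β_*, β^* such that every broken linear function q on T satisfies |q|_{H¹(T)} ≤ C h_T⁻¹ ‖q‖_{L²(T)}, where |q|_{H¹(T)} denotes the L²-norm of the piecewise gradient. -/

import Mathlib

open MeasureTheory Metric
open scoped RealInnerProductSpace

/-!
`T = T⁺ ∪ T⁻ ⊂ ℝ²` (Euclidean plane) has diameter `≤ h_T` and is cut by a line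
into `T⁺`, `T⁻`; the broken linear function has the form
`q(x) = a + b t·(x−x₀) + c (βb x)⁻¹ n·(x−x₀)` with the piecewise constant
coefficient `βb = β⁺` on `T⁺`, `β⁻` on `T⁻`, `0 < β_* ≤ β± ≤ β^*`, `n` a unit
normal to the cut and `t = n⊥`; its piecewise gradient is
`∇q(x) = b t + c (βb x)⁻¹ n`, and `|q|_{H¹(T)}` is the `L²(T)`-norm of the
piecewise gradient.  `B⁺ = B(z, ρ h_T/8) ⊆ T⁺` is a ball of radius `ρ h_T/8`,
and the inverse inequality for linear (affine) polynomials on balls of radius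
`ρ h_T/8` is assumed with constant `C_inv h_T⁻¹`. -/

set_option maxHeartbeats 1000000 in
/-- If `T⁺` contains a ball `B⁺` of radius `ρh_T/8` and the
inverse inequality `|p|_{H¹(B)} ≤ C_inv h_T⁻¹ ‖p‖_{L²(B)}` holds for affine
polynomials `p` on balls `B` of radius `ρh_T/8`, then there is a constant `C`
depending only on `ρ, β_*, β^*` (and `C_inv`) such that every broken linear
function `q` on `T` satisfies `|q|_{H¹(T)} ≤ C h_T⁻¹ ‖q‖_{L²(T)}`. -/
theorem broken_inverse_inequality (ρ βs βS Cinv : ℝ) (hρ : 0 < ρ)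
    (hβs : 0 < βs) (hβsS : βs ≤ βS) (hCinv : 0 < Cinv) :
    ∃ C > 0, ∀ (hT : ℝ) (Tp Tm : Set (EuclideanSpace ℝ (Fin 2)))
      (z n t x₀ : EuclideanSpace ℝ (Fin 2))
      (βb : EuclideanSpace ℝ (Fin 2) → ℝ) (βp βm a b c : ℝ),
      0 < hT →
      MeasurableSet Tp → MeasurableSet Tm → Measurable βb →
      Bornology.IsBounded (Tp ∪ Tm) → Metric.diam (Tp ∪ Tm) ≤ hT →
      ‖n‖ = 1 → ‖t‖ = 1 → ⟪t, n⟫ = 0 →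
      βs ≤ βp → βp ≤ βS → βs ≤ βm → βm ≤ βS →
      (∀ x ∈ Tp, βb x = βp) → (∀ x ∈ Tm, βb x = βm) →
      (∀ x, βs ≤ βb x ∧ βb x ≤ βS) →
      -- T⁺ contains a ball of radius ρ h_T / 8:
      closedBall z (ρ * hT / 8) ⊆ Tp →
      -- inverse inequality for affine polynomials on balls of radius ρ h_T / 8:
      (∀ (z' : EuclideanSpace ℝ (Fin 2)) (a' : ℝ) (v : EuclideanSpace ℝ (Fin 2)),
        Real.sqrt (∫ _x in closedBall z' (ρ * hT / 8), ‖v‖ ^ 2) ≤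
          Cinv * hT⁻¹ *
            Real.sqrt (∫ x in closedBall z' (ρ * hT / 8), (a' + ⟪x - z', v⟫) ^ 2)) →
      -- conclusion: |q|_{H¹(T)} ≤ C h_T⁻¹ ‖q‖_{L²(T)} for the broken linear q:
      Real.sqrt (∫ x in Tp ∪ Tm, ‖b • t + (c * (βb x)⁻¹) • n‖ ^ 2) ≤
        C * hT⁻¹ *
          Real.sqrt (∫ x in Tp ∪ Tm,
            (a + b * ⟪x - x₀, t⟫ + c * (βb x)⁻¹ * ⟪x - x₀, n⟫) ^ 2) := by
  have hβS : 0 < βS := hβs.trans_le hβsS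
  refine ⟨βS / βs * (8 / ρ) * Cinv, by positivity, ?_⟩
  intro hT Tp Tm z n t x₀ βb βp βm a b c hhT hTpm hTmm hβb hbdd hdiam hn ht htn
    hβp1 hβp2 hβm1 hβm2 hβbp hβbm hβbr hball hinv
  have hβp0 : 0 < βp := hβs.trans_le hβp1
  set r : ℝ := ρ * hT / 8 with hrdef
  have hr0 : 0 < r := by positivity
  set v : EuclideanSpace ℝ (Fin 2) := b • t + (c * βp⁻¹) • n with hvdef
  -- norm-squared formula
  have hns : ∀ s : ℝ, ‖b • t + (c * s⁻¹) • n‖ ^ 2 = b ^ 2 + (c * s⁻¹) ^ 2 := by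
    intro s
    rw [norm_add_sq_real, real_inner_smul_left, real_inner_smul_right, htn,
      norm_smul, norm_smul, hn, ht]
    simp [mul_pow, sq_abs]
  -- pointwise bound for the gradient
  have hpt : ∀ x, ‖b • t + (c * (βb x)⁻¹) • n‖ ^ 2 ≤ (βS / βs) ^ 2 * ‖v‖ ^ 2 := by
    intro x
    obtain ⟨h1, h2⟩ := hβbr x
    have hs0 : 0 < βb x := hβs.trans_le h1
    rw [hns, hvdef, hns]
    have e1 : (c * (βb x)⁻¹) ^ 2 ≤ (c * βs⁻¹) ^ 2 := by
      rw [mul_pow, mul_pow]; gcongr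
    have hq : βp ^ 2 ≤ βS ^ 2 := by nlinarith
    have e2 : (c * βs⁻¹) ^ 2 ≤ (βS / βs) ^ 2 * (c * βp⁻¹) ^ 2 := by
      calc (c * βs⁻¹) ^ 2 = (c / (βs * βp)) ^ 2 * βp ^ 2 := by field_simp
        _ ≤ (c / (βs * βp)) ^ 2 * βS ^ 2 := mul_le_mul_of_nonneg_left hq (by positivity)
        _ = (βS / βs) ^ 2 * (c * βp⁻¹) ^ 2 := by field_simp
    have hK : 1 ≤ (βS / βs) ^ 2 := one_le_pow₀ ((one_le_div hβs).mpr hβsS)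
    nlinarith [sq_nonneg b]
  -- basic set facts
  have hTmeas : MeasurableSet (Tp ∪ Tm) := hTpm.union hTmm
  have hTfin : volume (Tp ∪ Tm) < ⊤ := hbdd.measure_lt_top
  have hzT : z ∈ Tp := hball (mem_closedBall_self hr0.le)
  have hTsub : Tp ∪ Tm ⊆ closedBall z hT := fun x hx =>
    mem_closedBall.mpr ((dist_le_diam_of_mem hbdd hx (Set.mem_union_left _ hzT)).trans hdiam)
  -- measure estimates
  set μ1 : ENNReal := volume (ball (0 : EuclideanSpace ℝ (Fin 2)) 1) with hμ1def
  have hμ1fin : μ1 < ⊤ := measure_ball_lt_top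
  have hfr : Module.finrank ℝ (EuclideanSpace ℝ (Fin 2)) = 2 := finrank_euclideanSpace_fin
  have hmeasT : (volume (Tp ∪ Tm)).toReal ≤ hT ^ 2 * μ1.toReal := by
    have h1 : volume (Tp ∪ Tm) ≤ ENNReal.ofReal (hT ^ 2) * μ1 := by
      calc volume (Tp ∪ Tm) ≤ volume (closedBall z hT) := measure_mono hTsub
        _ = ENNReal.ofReal (hT ^ 2) * μ1 := by
            rw [Measure.addHaar_closedBall _ _ hhT.le, hfr]
    calc (volume (Tp ∪ Tm)).toReal ≤ (ENNReal.ofReal (hT ^ 2) * μ1).toReal :=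
          ENNReal.toReal_mono (by finiteness) h1
      _ = hT ^ 2 * μ1.toReal := by
          rw [ENNReal.toReal_mul, ENNReal.toReal_ofReal (by positivity)]
  have hmeasB : (volume (closedBall z r)).toReal = r ^ 2 * μ1.toReal := by
    rw [Measure.addHaar_closedBall _ _ hr0.le, hfr, ENNReal.toReal_mul,
      ENNReal.toReal_ofReal (by positivity)]
  -- integrability of the gradient squared
  have hgmeas : Measurable fun x => ‖b • t + (c * (βb x)⁻¹) • n‖ ^ 2 := by
    have : Measurable fun x => (c * (βb x)⁻¹) • n := (hβb.inv.const_mul c).smul_const n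
    exact (this.const_add (b • t)).norm.pow_const 2
  have hgint : IntegrableOn (fun x => ‖b • t + (c * (βb x)⁻¹) • n‖ ^ 2) (Tp ∪ Tm) := by
    refine Measure.integrableOn_of_bounded (M := (βS / βs) ^ 2 * ‖v‖ ^ 2)
      hTfin.ne hgmeas.aestronglyMeasurable ?_
    filter_upwards with x
    rw [Real.norm_eq_abs, abs_of_nonneg (sq_nonneg _)]
    exact hpt x
  -- bound the gradient integral by the ball integral
  have hintv : ∫ _x in closedBall z r, ‖v‖ ^ 2 = (volume (closedBall z r)).toReal * ‖v‖ ^ 2 := by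
    rw [setIntegral_const, smul_eq_mul]; rfl
  have hint1 : ∫ x in Tp ∪ Tm, ‖b • t + (c * (βb x)⁻¹) • n‖ ^ 2 ≤
      ((βS / βs) * (hT / r)) ^ 2 * ∫ _x in closedBall z r, ‖v‖ ^ 2 := by
    calc ∫ x in Tp ∪ Tm, ‖b • t + (c * (βb x)⁻¹) • n‖ ^ 2
        ≤ ∫ _x in Tp ∪ Tm, (βS / βs) ^ 2 * ‖v‖ ^ 2 :=
          setIntegral_mono_on hgint (integrableOn_const hTfin.ne) hTmeas
            (fun x _ => hpt x)
      _ = (volume (Tp ∪ Tm)).toReal * ((βS / βs) ^ 2 * ‖v‖ ^ 2) := by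
          rw [setIntegral_const, smul_eq_mul]; rfl
      _ ≤ (hT ^ 2 * μ1.toReal) * ((βS / βs) ^ 2 * ‖v‖ ^ 2) := by
          apply mul_le_mul_of_nonneg_right hmeasT (by positivity)
      _ = ((βS / βs) * (hT / r)) ^ 2 * (r ^ 2 * μ1.toReal * ‖v‖ ^ 2) := by
          field_simp
      _ = ((βS / βs) * (hT / r)) ^ 2 * ∫ _x in closedBall z r, ‖v‖ ^ 2 := by
          rw [hintv, hmeasB]
  -- the broken function is affine on the ball
  set a' : ℝ := a + b * ⟪z - x₀, t⟫ + c * βp⁻¹ * ⟪z - x₀, n⟫ with ha'def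
  have hcongr : ∫ x in closedBall z r, (a' + ⟪x - z, v⟫) ^ 2 =
      ∫ x in closedBall z r, (a + b * ⟪x - x₀, t⟫ + c * (βb x)⁻¹ * ⟪x - x₀, n⟫) ^ 2 := by
    refine setIntegral_congr_fun (measurableSet_closedBall) (fun x hx => ?_)
    have hbx : βb x = βp := hβbp x (hball hx)
    have hxsplit : x - x₀ = (x - z) + (z - x₀) := by abel
    rw [hbx, hxsplit, inner_add_left, inner_add_left, hvdef, inner_add_right,
      real_inner_smul_right, real_inner_smul_right, ha'def]
    ring
  -- integrability of the squared function on T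
  have hinnert : Measurable fun x : EuclideanSpace ℝ (Fin 2) => ⟪x - x₀, t⟫ :=
    ((continuous_id.sub continuous_const).inner continuous_const).measurable
  have hinnern : Measurable fun x : EuclideanSpace ℝ (Fin 2) => ⟪x - x₀, n⟫ :=
    ((continuous_id.sub continuous_const).inner continuous_const).measurable
  have hqmeas : Measurable fun x : EuclideanSpace ℝ (Fin 2) =>
      (a + b * ⟪x - x₀, t⟫ + c * (βb x)⁻¹ * ⟪x - x₀, n⟫) ^ 2 :=
    ((((hinnert.const_mul b).const_add a).add
      (((hβb.inv.const_mul c)).mul hinnern)).pow_const 2)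
  set M : ℝ := hT + ‖z - x₀‖ with hMdef
  have hqbdd : ∀ x ∈ Tp ∪ Tm,
      (a + b * ⟪x - x₀, t⟫ + c * (βb x)⁻¹ * ⟪x - x₀, n⟫) ^ 2 ≤
      (|a| + |b| * M + |c| * βs⁻¹ * M) ^ 2 := by
    intro x hx
    obtain ⟨h1, h2⟩ := hβbr x
    have hs0 : 0 < βb x := hβs.trans_le h1
    have hxM : ‖x - x₀‖ ≤ M := by
      have hz : dist x z ≤ hT := mem_closedBall.mp (hTsub hx)
      calc ‖x - x₀‖ = ‖(x - z) + (z - x₀)‖ := by rw [sub_add_sub_cancel]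
        _ ≤ ‖x - z‖ + ‖z - x₀‖ := norm_add_le _ _
        _ ≤ hT + ‖z - x₀‖ := by rw [← dist_eq_norm]; exact add_le_add_left hz _
    have hM0 : 0 ≤ M := (norm_nonneg _).trans hxM
    have hi1 : |⟪x - x₀, t⟫| ≤ M := by
      calc |⟪x - x₀, t⟫| ≤ ‖x - x₀‖ * ‖t‖ := abs_real_inner_le_norm _ _
        _ = ‖x - x₀‖ := by rw [ht, mul_one]
        _ ≤ M := hxM
    have hi2 : |⟪x - x₀, n⟫| ≤ M := by
      calc |⟪x - x₀, n⟫| ≤ ‖x - x₀‖ * ‖n‖ := abs_real_inner_le_norm _ _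
        _ = ‖x - x₀‖ := by rw [hn, mul_one]
        _ ≤ M := hxM
    have habs : |a + b * ⟪x - x₀, t⟫ + c * (βb x)⁻¹ * ⟪x - x₀, n⟫| ≤
        |a| + |b| * M + |c| * βs⁻¹ * M := by
      calc |a + b * ⟪x - x₀, t⟫ + c * (βb x)⁻¹ * ⟪x - x₀, n⟫|
          ≤ |a + b * ⟪x - x₀, t⟫| + |c * (βb x)⁻¹ * ⟪x - x₀, n⟫| := abs_add_le _ _
        _ ≤ (|a| + |b * ⟪x - x₀, t⟫|) + |c * (βb x)⁻¹ * ⟪x - x₀, n⟫| :=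
            add_le_add_left (abs_add_le _ _) _
        _ ≤ |a| + |b| * M + |c| * βs⁻¹ * M := by
            rw [abs_mul, abs_mul, abs_mul, abs_inv, abs_of_pos hs0]
            have : (βb x)⁻¹ ≤ βs⁻¹ := by gcongr
            have h3 : |b| * |⟪x - x₀, t⟫| ≤ |b| * M :=
              mul_le_mul_of_nonneg_left hi1 (abs_nonneg _)
            have h4 : |c| * (βb x)⁻¹ * |⟪x - x₀, n⟫| ≤ |c| * βs⁻¹ * M := by
              apply mul_le_mul (mul_le_mul_of_nonneg_left this (abs_nonneg _)) hi2
                (abs_nonneg _) (by positivity)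
            exact add_le_add (add_le_add_right h3 |a|) h4
    obtain ⟨hl, hr⟩ := abs_le.mp habs
    exact sq_le_sq' hl hr
  have hqint : IntegrableOn (fun x => (a + b * ⟪x - x₀, t⟫ + c * (βb x)⁻¹ * ⟪x - x₀, n⟫) ^ 2)
      (Tp ∪ Tm) := by
    refine Measure.integrableOn_of_bounded (M := (|a| + |b| * M + |c| * βs⁻¹ * M) ^ 2)
      hTfin.ne hqmeas.aestronglyMeasurable ?_
    rw [ae_restrict_iff' hTmeas]
    filter_upwards with x hx
    rw [Real.norm_eq_abs, abs_of_nonneg (sq_nonneg _)]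
    exact hqbdd x hx
  have hmono : ∫ x in closedBall z r, (a + b * ⟪x - x₀, t⟫ + c * (βb x)⁻¹ * ⟪x - x₀, n⟫) ^ 2 ≤
      ∫ x in Tp ∪ Tm, (a + b * ⟪x - x₀, t⟫ + c * (βb x)⁻¹ * ⟪x - x₀, n⟫) ^ 2 :=
    setIntegral_mono_set hqint (Filter.Eventually.of_forall fun x => by positivity)
      (HasSubset.Subset.eventuallyLE (hball.trans Set.subset_union_left))
  -- put everything together
  have hXnn : 0 ≤ ∫ _x in closedBall z r, ‖v‖ ^ 2 := by
    rw [hintv]; positivity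
  have hKr : 0 ≤ (βS / βs) * (hT / r) := by positivity
  calc Real.sqrt (∫ x in Tp ∪ Tm, ‖b • t + (c * (βb x)⁻¹) • n‖ ^ 2)
      ≤ Real.sqrt (((βS / βs) * (hT / r)) ^ 2 * ∫ _x in closedBall z r, ‖v‖ ^ 2) :=
        Real.sqrt_le_sqrt hint1
    _ = (βS / βs) * (hT / r) * Real.sqrt (∫ _x in closedBall z r, ‖v‖ ^ 2) := by
        rw [Real.sqrt_mul (by positivity), Real.sqrt_sq hKr]
    _ ≤ (βS / βs) * (hT / r) * (Cinv * hT⁻¹ *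
        Real.sqrt (∫ x in closedBall z r, (a' + ⟪x - z, v⟫) ^ 2)) :=
        mul_le_mul_of_nonneg_left (hinv z a' v) hKr
    _ = (βS / βs) * (hT / r) * (Cinv * hT⁻¹ *
        Real.sqrt (∫ x in closedBall z r, (a + b * ⟪x - x₀, t⟫ + c * (βb x)⁻¹ * ⟪x - x₀, n⟫) ^ 2)) := by
        rw [hcongr]
    _ ≤ (βS / βs) * (hT / r) * (Cinv * hT⁻¹ *
        Real.sqrt (∫ x in Tp ∪ Tm, (a + b * ⟪x - x₀, t⟫ + c * (βb x)⁻¹ * ⟪x - x₀, n⟫) ^ 2)) := by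
        apply mul_le_mul_of_nonneg_left _ hKr
        exact mul_le_mul_of_nonneg_left (Real.sqrt_le_sqrt hmono) (by positivity)
    _ = βS / βs * (8 / ρ) * Cinv * hT⁻¹ *
        Real.sqrt (∫ x in Tp ∪ Tm, (a + b * ⟪x - x₀, t⟫ + c * (βb x)⁻¹ * ⟪x - x₀, n⟫) ^ 2) := by
        rw [hrdef]
        field_simp
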